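/- Let s₀, …, s_κ be complex p×q matrices with reciprocal sequence r₀, …, r_κ. Let v_j = Σ_{ℓ=0}^{j} r_ℓ s_{j−ℓ} be the Cauchy product of (r_j) with (s_j), and let w_j = Σ_{ℓ=0}^{j} s_ℓ r_{j−ℓ} be the Cauchy product of (s_j) with (r_j). Then for all j, k ∈ {0,…,κ}: v_j r_k = δ_{0j} r_k and r_k w_j = δ_{0j} r_k, where δ denotes the Kronecker delta. -/

import Mathlib

open Matrix Finset

/-- `X` is the Moore–Penrose inverse of `A`. -/
def IsMPInv {m n : Type*} [Fintype m] [Fintype n]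
    (A : Matrix m n ℂ) (X : Matrix n m ℂ) : Prop :=
  A * X * A = A ∧ X * A * X = X ∧ (A * X)ᴴ = A * X ∧ (X * A)ᴴ = X * A

/-- Cauchy products of a sequence with its reciprocal sequence act like the
Kronecker delta on the reciprocal sequence. -/
theorem cauchyProduct_reciprocal {p q : ℕ} (κ : ℕ)
    (s : ℕ → Matrix (Fin p) (Fin q) ℂ)
    (sInv : Matrix (Fin q) (Fin p) ℂ) (hs : IsMPInv (s 0) sInv)
    (r : ℕ → Matrix (Fin q) (Fin p) ℂ)
    (hr0 : r 0 = sInv)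
    (hr : ∀ j, 1 ≤ j → j ≤ κ →
      r j = -(sInv * ∑ ℓ ∈ Finset.range j, s (j - ℓ) * r ℓ))
    (v : ℕ → Matrix (Fin q) (Fin q) ℂ)
    (hv : ∀ j, j ≤ κ → v j = ∑ ℓ ∈ Finset.range (j+1), r ℓ * s (j - ℓ))
    (w : ℕ → Matrix (Fin p) (Fin p) ℂ)
    (hw : ∀ j, j ≤ κ → w j = ∑ ℓ ∈ Finset.range (j+1), s ℓ * r (j - ℓ)) :
    ∀ j k, j ≤ κ → k ≤ κ →
      v j * r k = (if j = 0 then r k else 0) ∧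
      r k * w j = (if j = 0 then r k else 0) := by
  obtain ⟨h1, h2, h3, h4⟩ := hs
  -- sInv absorbs `sInv * s 0 *` on the left of every r j
  have L1 : ∀ j, j ≤ κ → sInv * (s 0 * r j) = r j := by
    intro j hj
    rcases Nat.eq_zero_or_pos j with h0 | h0
    · subst h0; rw [hr0, ← Matrix.mul_assoc]; exact h2
    · rw [hr j h0 hj, Matrix.mul_neg, Matrix.mul_neg, neg_inj,
        ← Matrix.mul_assoc, ← Matrix.mul_assoc, h2]
  -- r j absorbs `* s 0 * sInv` on the right
  have L2 : ∀ j, j ≤ κ → r j * s 0 * sInv = r j := by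
    intro j
    induction j using Nat.strong_induction_on with
    | _ j ih =>
      intro hj
      rcases Nat.eq_zero_or_pos j with h0 | h0
      · subst h0; rw [hr0]; exact h2
      · have key : (∑ ℓ ∈ Finset.range j, s (j - ℓ) * r ℓ) * s 0 * sInv
            = ∑ ℓ ∈ Finset.range j, s (j - ℓ) * r ℓ := by
          rw [Matrix.sum_mul, Matrix.sum_mul]
          refine Finset.sum_congr rfl fun ℓ hℓ => ?_
          have hℓj : ℓ < j := mem_range.mp hℓ
          rw [Matrix.mul_assoc, Matrix.mul_assoc, ← Matrix.mul_assoc (r ℓ),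
            ih ℓ hℓj (le_trans hℓj.le hj)]
        rw [hr j h0 hj, Matrix.neg_mul, Matrix.neg_mul, neg_inj, Matrix.mul_assoc,
          Matrix.mul_assoc, ← Matrix.mul_assoc (∑ ℓ ∈ Finset.range j, s (j - ℓ) * r ℓ), key]
  -- the key delta identity for the v-type Cauchy product hit with sInv
  have C : ∀ j, j ≤ κ →
      (∑ ℓ ∈ Finset.range (j+1), r ℓ * s (j - ℓ)) * sInv
        = if j = 0 then sInv else 0 := by
    intro j
    induction j using Nat.strong_induction_on with
    | _ j ih =>
      intro hj
      rcases Nat.eq_zero_or_pos j with h0 | h0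
      · subst h0
        rw [if_pos rfl, Finset.sum_range_one, hr0]
        exact h2
      · rw [if_neg (Nat.pos_iff_ne_zero.mp h0)]
        rw [Matrix.sum_mul, Finset.sum_range_succ']
        have step : ∀ i ∈ Finset.range j,
            r (i+1) * s (j - (i+1)) * sInv
              = -(sInv * ∑ m ∈ Finset.range (i+1),
                  s (i+1-m) * (r m * s (j - (i+1)) * sInv)) := by
          intro i hi
          have hi1 : i + 1 ≤ j := Nat.succ_le_of_lt (mem_range.mp hi)
          rw [hr (i+1) (Nat.succ_le_succ (Nat.zero_le i)) (le_trans hi1 hj)]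
          simp only [Matrix.neg_mul, Matrix.mul_neg, Matrix.sum_mul, Matrix.mul_sum,
            Matrix.mul_assoc]
        rw [Finset.sum_congr rfl step]
        have pull : (∑ i ∈ Finset.range j,
            -(sInv * ∑ m ∈ Finset.range (i+1),
                s (i+1-m) * (r m * s (j - (i+1)) * sInv)))
            = -(sInv * ∑ i ∈ Finset.range j, ∑ m ∈ Finset.range (i+1),
                s (i+1-m) * (r m * s (j - (i+1)) * sInv)) := by
          rw [Matrix.mul_sum]
          exact Finset.sum_neg_distrib _
        rw [pull]
        -- reindex the double sum
        have reindex :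
            (∑ i ∈ Finset.range j, ∑ m ∈ Finset.range (i+1),
                s (i+1-m) * (r m * s (j - (i+1)) * sInv))
              = ∑ b ∈ Finset.range j, ∑ m ∈ Finset.range (j - b),
                  s (b+1) * (r m * s (j - (b+1) - m) * sInv) := by
          rw [Finset.sum_sigma', Finset.sum_sigma']
          refine Finset.sum_nbij' (fun x => ⟨x.1 - x.2, x.2⟩) (fun y => ⟨y.1 + y.2, y.2⟩)
            ?_ ?_ ?_ ?_ ?_
          · rintro ⟨i, m⟩ hx
            simp only [Finset.mem_sigma, mem_range] at hx ⊢
            omega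
          · rintro ⟨b, m⟩ hy
            simp only [Finset.mem_sigma, mem_range] at hy ⊢
            omega
          · rintro ⟨i, m⟩ hx
            simp only [Finset.mem_sigma, mem_range] at hx
            simp only [Sigma.mk.inj_iff, heq_eq_eq]
            exact ⟨by omega, trivial⟩
          · rintro ⟨b, m⟩ hy
            simp only [Finset.mem_sigma, mem_range] at hy
            simp only [Sigma.mk.inj_iff, heq_eq_eq]
            exact ⟨by omega, trivial⟩
          · rintro ⟨i, m⟩ hx
            simp only [Finset.mem_sigma, mem_range] at hx
            have e1 : i + 1 - m = i - m + 1 := by omega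
            have e2 : j - (i + 1) = j - (i - m + 1) - m := by omega
            rw [e1, e2]
        rw [reindex]
        have inner : ∀ b ∈ Finset.range j,
            (∑ m ∈ Finset.range (j - b),
                s (b+1) * (r m * s (j - (b+1) - m) * sInv))
              = s (b+1) * (if j - (b+1) = 0 then sInv else 0) := by
          intro b hb
          have hbj : b < j := mem_range.mp hb
          rw [← Matrix.mul_sum]
          congr 1
          have hrange : j - b = (j - (b+1)) + 1 := by omega
          rw [hrange, ← Matrix.sum_mul]
          exact ih (j - (b+1)) (by omega) (by omega)
        rw [Finset.sum_congr rfl inner]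
        have only_top : (∑ b ∈ Finset.range j,
            s (b+1) * (if j - (b+1) = 0 then sInv else 0)) = s j * sInv := by
          rw [Finset.sum_eq_single_of_mem (j - 1) (mem_range.mpr (by omega))]
          · have e : j - 1 + 1 = j := by omega
            rw [e, if_pos (by omega)]
          · intro b hb hne
            have hbj : b < j := mem_range.mp hb
            rw [if_neg (by omega), Matrix.mul_zero]
        rw [only_top, hr0, Nat.sub_zero, Matrix.mul_assoc, neg_add_cancel]
  intro j k hj hk
  constructor
  · rw [hv j hj]
    rcases Nat.eq_zero_or_pos j with h0 | h0
    · subst h0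
      rw [if_pos rfl, Finset.sum_range_one, hr0, Matrix.mul_assoc]
      exact L1 k hk
    · rw [if_neg (Nat.pos_iff_ne_zero.mp h0)]
      calc (∑ ℓ ∈ Finset.range (j+1), r ℓ * s (j - ℓ)) * r k
          = (∑ ℓ ∈ Finset.range (j+1), r ℓ * s (j - ℓ)) * (sInv * (s 0 * r k)) := by
            rw [L1 k hk]
        _ = ((∑ ℓ ∈ Finset.range (j+1), r ℓ * s (j - ℓ)) * sInv) * (s 0 * r k) := by
            rw [Matrix.mul_assoc]
        _ = 0 := by rw [C j hj, if_neg (Nat.pos_iff_ne_zero.mp h0), Matrix.zero_mul]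
  · rw [hw j hj]
    rcases Nat.eq_zero_or_pos j with h0 | h0
    · subst h0
      rw [if_pos rfl, Finset.sum_range_one, hr0, ← Matrix.mul_assoc]
      exact L2 k hk
    · rw [if_neg (Nat.pos_iff_ne_zero.mp h0)]
      have split : (∑ ℓ ∈ Finset.range (j+1), s ℓ * r (j - ℓ))
          = (∑ i ∈ Finset.range j, s (i+1) * r (j - (i+1))) + s 0 * r (j - 0) := by
        rw [Finset.sum_range_succ']
      have reflect : (∑ i ∈ Finset.range j, s (i+1) * r (j - (i+1)))
          = ∑ m ∈ Finset.range j, s (j - m) * r m := by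
        rw [← Finset.sum_range_reflect (fun m => s (j - m) * r m) j]
        refine Finset.sum_congr rfl fun i hi => ?_
        have hij : i < j := mem_range.mp hi
        have e1 : j - (j - 1 - i) = i + 1 := by omega
        have e2 : j - 1 - i = j - (i + 1) := by omega
        rw [e1, e2]
      rw [split, reflect, Nat.sub_zero, hr j h0 hj]
      have key2 : r k * (s 0 * (sInv * ∑ ℓ ∈ Finset.range j, s (j - ℓ) * r ℓ))
          = r k * ∑ ℓ ∈ Finset.range j, s (j - ℓ) * r ℓ := by
        rw [← Matrix.mul_assoc, ← Matrix.mul_assoc, L2 k hk]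
      rw [Matrix.mul_neg, Matrix.mul_add, Matrix.mul_neg, key2, add_neg_cancel]
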